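/- Let n ≥ 1 and R ≥ 13. Let y be a Perron number whose minimal polynomial over ℚ has degree n, with R/2 ≤ y ≤ R, and such that every Galois conjugate μ ≠ y of y satisfies |μ| < R/3. Let λ = (y + √(y² − 4))/2 be the larger real root of X² − yX + 1. Then λ is a bi-Perron algebraic unit, 1 < λ ≤ R, and λ is a root of a monic palindromic polynomial in ℤ[X] of degree 2n. -/

import Mathlib

open Polynomial

noncomputable def palin (q : Polynomial ℤ) (n : ℕ) : Polynomial ℤ :=
  ∑ k ∈ Finset.range (n+1), C (q.coeff k) * (X^(n-k) * (X^2+1)^k)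

lemma reflect_pow_sq_add_one (k : ℕ) :
    reflect (2*k) (((X:Polynomial ℤ)^2+1)^k) = ((X:Polynomial ℤ)^2+1)^k := by
  induction k with
  | zero => simp
  | succ k ih =>
    have h2 : 2*(k+1) = 2 + 2*k := by ring
    have hd : ((X:Polynomial ℤ)^2+1).natDegree ≤ 2 := by
      rw [show ((X:Polynomial ℤ)^2+1) = X^2 + C 1 by simp, natDegree_X_pow_add_C]
    have hdk : (((X:Polynomial ℤ)^2+1)^k).natDegree ≤ 2*k :=
      le_trans (natDegree_pow_le) (by nlinarith [hd])
    rw [h2, pow_succ', reflect_mul _ _ hd hdk, ih]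
    congr 1
    rw [reflect_add, reflect_monomial, reflect_one]
    · simp [revAt_le]
      ring


lemma reflect_palin_term (n k : ℕ) (hk : k ≤ n) (c : ℤ) :
    reflect (2*n) (C c * ((X:Polynomial ℤ)^(n-k) * (X^2+1)^k))
      = C c * ((X:Polynomial ℤ)^(n-k) * (X^2+1)^k) := by
  rw [reflect_C_mul]
  congr 1
  have hd : ((X:Polynomial ℤ)^2+1).natDegree ≤ 2 := by
    rw [show ((X:Polynomial ℤ)^2+1) = X^2 + C 1 by simp, natDegree_X_pow_add_C]
  have hdk : (((X:Polynomial ℤ)^2+1)^k).natDegree ≤ n + k :=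
    le_trans (natDegree_pow_le) (by nlinarith [hd])
  have h1 : 2*n = (n-k) + (n+k) := by omega
  rw [h1, reflect_mul _ _ (natDegree_X_pow _).le hdk, reflect_monomial, revAt_le le_rfl,
    Nat.sub_self, pow_zero, one_mul]
  have h3 : n + k = 2*k + (n-k) := by omega
  have h4 : reflect (n+k) ((((X:Polynomial ℤ)^2+1)^k) * 1) =
      reflect (2*k) (((X:Polynomial ℤ)^2+1)^k) * reflect (n-k) 1 := by
    rw [h3]
    exact reflect_mul _ _ (le_trans natDegree_pow_le (by nlinarith [hd])) (by simp)
  rw [mul_one] at h4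
  rw [h4, reflect_pow_sq_add_one, reflect_one]
  ring

lemma reflect_sum (N : ℕ) (s : Finset ℕ) (f : ℕ → Polynomial ℤ) :
    reflect N (∑ k ∈ s, f k) = ∑ k ∈ s, reflect N (f k) := by
  induction s using Finset.induction with
  | empty => simp
  | insert _ _ h ih => simp [Finset.sum_insert h, reflect_add, ih]

lemma palin_term_degree_lt (n k : ℕ) (hk : k < n) (c : ℤ) :
    (C c * ((X:Polynomial ℤ)^(n-k) * (X^2+1)^k)).degree < ((2*n : ℕ) : WithBot ℕ) := by
  have hd : ((X:Polynomial ℤ)^2+1).natDegree ≤ 2 := by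
    rw [show ((X:Polynomial ℤ)^2+1) = X^2 + C 1 by simp, natDegree_X_pow_add_C]
  have hdk : (((X:Polynomial ℤ)^2+1)^k).natDegree ≤ 2*k :=
    natDegree_pow_le.trans (le_trans (Nat.mul_le_mul_left k hd) (by omega))
  have h : (C c * ((X:Polynomial ℤ)^(n-k) * (X^2+1)^k)).natDegree ≤ n + k := by
    refine le_trans (natDegree_mul_le) ?_
    have := le_trans (natDegree_mul_le (p := (X:Polynomial ℤ)^(n-k)) (q := (X^2+1)^k))
      (add_le_add (natDegree_X_pow (R := ℤ) (n-k)).le hdk)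
    simp only [natDegree_C, zero_add]
    omega
  calc (C c * ((X:Polynomial ℤ)^(n-k) * (X^2+1)^k)).degree
      ≤ ((C c * ((X:Polynomial ℤ)^(n-k) * (X^2+1)^k)).natDegree : WithBot ℕ) :=
        degree_le_natDegree
    _ ≤ ((n + k : ℕ) : WithBot ℕ) := by exact_mod_cast h
    _ < ((2*n : ℕ) : WithBot ℕ) := by exact_mod_cast (by omega : n + k < 2*n)

lemma palin_monic (q : Polynomial ℤ) (n : ℕ) (hn : 1 ≤ n) (hq : q.Monic)
    (hqn : q.natDegree = n) :
    (palin q n).Monic ∧ (palin q n).natDegree = 2*n ∧ (palin q n).reverse = palin q n := by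
  have hd : ((X:Polynomial ℤ)^2+1).natDegree = 2 := by
    rw [show ((X:Polynomial ℤ)^2+1) = X^2 + C 1 by simp, natDegree_X_pow_add_C]
  have hPmonic : (((X:Polynomial ℤ)^2+1)^n).Monic := by
    refine Monic.pow ?_ n
    exact monic_X_pow_add (p := (1 : Polynomial ℤ)) (n := 2)
      (by rw [degree_one]; exact_mod_cast (by norm_num : (0 : WithBot ℕ) < 2))
  have hPdeg : (((X:Polynomial ℤ)^2+1)^n).natDegree = 2*n := by
    rw [natDegree_pow, hd]; ring
  have hc : q.coeff n = 1 := by rw [← hqn]; exact hq.coeff_natDegree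
  have hsplit : palin q n
      = (((X:Polynomial ℤ)^2+1)^n) + ∑ k ∈ Finset.range n, C (q.coeff k) * (X^(n-k) * (X^2+1)^k) := by
    rw [palin, Finset.sum_range_succ, Nat.sub_self, pow_zero, one_mul, hc, map_one, one_mul,
      add_comm]
  have hrestdeg : (∑ k ∈ Finset.range n, C (q.coeff k) * ((X:Polynomial ℤ)^(n-k) * (X^2+1)^k)).degree
      < (((X:Polynomial ℤ)^2+1)^n).degree := by
    have hPd : (((X:Polynomial ℤ)^2+1)^n).degree = ((2*n : ℕ) : WithBot ℕ) := by
      rw [degree_eq_natDegree hPmonic.ne_zero, hPdeg]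
    rw [hPd]
    refine lt_of_le_of_lt (degree_sum_le _ _) ?_
    rw [Finset.sup_lt_iff (WithBot.bot_lt_coe _)]
    intro k hk
    exact palin_term_degree_lt n k (Finset.mem_range.mp hk) _
  have hmonic : (palin q n).Monic := by
    rw [hsplit]; exact hPmonic.add_of_left hrestdeg
  have hdeg : (palin q n).natDegree = 2*n := by
    have hde : (palin q n).degree = (((X:Polynomial ℤ)^2+1)^n).degree := by
      rw [hsplit]; rw [add_comm]; exact degree_add_eq_right_of_degree_lt hrestdeg
    rw [natDegree_eq_of_degree_eq hde, hPdeg]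
  refine ⟨hmonic, hdeg, ?_⟩
  rw [Polynomial.reverse, hdeg, palin, reflect_sum]
  refine Finset.sum_congr rfl fun k hk => ?_
  exact reflect_palin_term n k (by have := Finset.mem_range.mp hk; omega) _

lemma aeval_palin {K : Type*} [Field K] [Algebra ℤ K] (q : Polynomial ℤ) (n : ℕ)
    (hq : q.natDegree < n + 1) (x : K) (hx : x ≠ 0) :
    Polynomial.aeval x (palin q n) = x^n * Polynomial.aeval (x + x⁻¹) q := by
  rw [aeval_eq_sum_range' hq, palin, map_sum, Finset.mul_sum]
  refine Finset.sum_congr rfl fun k hk => ?_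
  have hk' : k ≤ n := by have := Finset.mem_range.mp hk; omega
  have hxx : x * (x + x⁻¹) = x^2 + 1 := by field_simp
  have hpow : x^n = x^(n-k) * x^k := by rw [← pow_add]; congr 1; omega
  simp only [map_mul, aeval_C, map_pow, aeval_X, map_add, map_one, zsmul_eq_mul]
  rw [hpow, Algebra.smul_def, mul_assoc (x^(n-k)), show x^k * ((algebraMap ℤ K) (q.coeff k) * (x+x⁻¹)^k) = (algebraMap ℤ K) (q.coeff k) * (x * (x+x⁻¹))^k by rw [mul_pow]; ring, hxx]
  ring

lemma complex_abs_le (μ : ℂ) (hμ : μ ≠ 0) (B : ℝ) (hB : 1 ≤ B)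
    (h : ‖μ + μ⁻¹‖ + 1 ≤ B) : ‖μ‖ ≤ B := by
  rcases le_or_gt (‖μ‖) 1 with h1 | h1
  · linarith
  · have he : μ = (μ + μ⁻¹) + (-μ⁻¹) := by ring
    have h2 : ‖μ‖ ≤ ‖μ + μ⁻¹‖ + ‖μ⁻¹‖ := by
      calc ‖μ‖ = ‖(μ + μ⁻¹) + (-μ⁻¹)‖ := by rw [← he]
      _ ≤ ‖μ + μ⁻¹‖ + ‖-μ⁻¹‖ := norm_add_le _ _
      _ = ‖μ + μ⁻¹‖ + ‖μ⁻¹‖ := by rw [norm_neg]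
    have h3 : ‖μ⁻¹‖ ≤ 1 := by
      rw [norm_inv]
      exact inv_le_one_of_one_le₀ h1.le
    linarith


/-- A Perron number: a real algebraic integer `λ > 1` all of whose Galois conjugates
`μ ≠ λ` satisfy `|μ| < λ`. -/
def IsPerronNumber (l : ℝ) : Prop :=
  1 < l ∧ IsIntegral ℤ l ∧
    ∀ μ ∈ (minpoly ℚ l).aroots ℂ, μ ≠ (l : ℂ) → ‖μ‖ < l

/-- A bi-Perron algebraic unit: a real algebraic unit `λ > 1` all of whose Galois
conjugates `μ` satisfy `1/λ ≤ |μ| ≤ λ`. -/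
def IsBiPerronUnit (l : ℝ) : Prop :=
  1 < l ∧ IsIntegral ℤ l ∧ IsIntegral ℤ l⁻¹ ∧
    ∀ μ ∈ (minpoly ℚ l).aroots ℂ, 1 / l ≤ ‖μ‖ ∧ ‖μ‖ ≤ l


set_option maxHeartbeats 1000000 in
/-- If `y` is a Perron number of degree `n` with `R/2 ≤ y ≤ R`, `R ≥ 13`,
whose Galois conjugates `μ ≠ y` satisfy `|μ| < R/3`, then `λ = (y + √(y² − 4))/2` (the larger
real root of `X² − yX + 1`) is a bi-Perron algebraic unit with `1 < λ ≤ R`, and `λ` is a root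
of a monic palindromic integer polynomial of degree `2n`. -/
theorem biPerron_from_perron (n : ℕ) (hn : 1 ≤ n) (R : ℝ) (hR : 13 ≤ R)
    (y : ℝ) (hy : IsPerronNumber y) (hdeg : (minpoly ℚ y).natDegree = n)
    (hy1 : R / 2 ≤ y) (hy2 : y ≤ R)
    (hconj : ∀ μ ∈ (minpoly ℚ y).aroots ℂ, μ ≠ (y : ℂ) → ‖μ‖ < R / 3) :
    IsBiPerronUnit ((y + Real.sqrt (y ^ 2 - 4)) / 2) ∧
    1 < (y + Real.sqrt (y ^ 2 - 4)) / 2 ∧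
    (y + Real.sqrt (y ^ 2 - 4)) / 2 ≤ R ∧
    ∃ p : Polynomial ℤ, p.Monic ∧ p.reverse = p ∧ p.natDegree = 2 * n ∧
      Polynomial.aeval ((y + Real.sqrt (y ^ 2 - 4)) / 2) p = 0 := by
  obtain ⟨hy0, hyint, -⟩ := hy
  have hy' : (13:ℝ)/2 ≤ y := by linarith
  have h4 : (0:ℝ) ≤ y^2 - 4 := by nlinarith
  set s := Real.sqrt (y^2-4) with hs_def
  have hs2 : s^2 = y^2 - 4 := Real.sq_sqrt h4
  have hs0 : 0 ≤ s := Real.sqrt_nonneg _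
  have hsy : s ≤ y := by nlinarith
  have hsy1 : y - 1 ≤ s := by nlinarith
  set l := (y + s)/2 with hl_def
  have hl1 : 1 < l := by rw [hl_def]; linarith
  have hl0 : 0 < l := by linarith
  have hlR : l ≤ R := by rw [hl_def]; linarith
  have hl3 : R/3 + 1 ≤ l := by rw [hl_def]; linarith
  have hlq : l^2 - y*l + 1 = 0 := by rw [hl_def]; linear_combination hs2/4
  have hmul : l * (y - l) = 1 := by linear_combination -hlq
  have hinv : l⁻¹ = y - l := inv_eq_of_mul_eq_one_right hmul
  have hsum : l + l⁻¹ = y := by rw [hinv]; ring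
  set q := minpoly ℤ y with hq_def
  have hqmonic : q.Monic := minpoly.monic hyint
  have hmap : minpoly ℚ y = q.map (algebraMap ℤ ℚ) :=
    minpoly.isIntegrallyClosed_eq_field_fractions ℚ ℝ hyint
  have hqdeg : q.natDegree = n := by
    rw [hmap, hqmonic.natDegree_map] at hdeg; exact hdeg
  obtain ⟨hpmonic, hpdeg, hprev⟩ := palin_monic q n hn hqmonic hqdeg
  have hql : Polynomial.aeval l (palin q n) = 0 := by
    rw [aeval_palin q n (by omega) l (ne_of_gt hl0), hsum, minpoly.aeval, mul_zero]
  have hlint : IsIntegral ℤ l := ⟨palin q n, hpmonic, by rw [← aeval_def]; exact hql⟩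
  have hlinvint : IsIntegral ℤ l⁻¹ := by rw [hinv]; exact hyint.sub hlint
  have hpdvd : minpoly ℚ l ∣ (palin q n).map (algebraMap ℤ ℚ) :=
    minpoly.dvd ℚ l (by rwa [aeval_map_algebraMap])
  have hbound : ∀ μ ∈ (minpoly ℚ l).aroots ℂ,
      1/l ≤ ‖μ‖ ∧ ‖μ‖ ≤ l := by
    intro μ hμ
    rw [mem_aroots] at hμ
    obtain ⟨-, hμ0⟩ := hμ
    have hpμ : Polynomial.aeval μ (palin q n) = 0 := by
      obtain ⟨c, hc⟩ := hpdvd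
      have h1 : Polynomial.aeval μ ((palin q n).map (algebraMap ℤ ℚ)) = 0 := by
        rw [hc, map_mul, hμ0, zero_mul]
      rwa [aeval_map_algebraMap] at h1
    have hμne : μ ≠ 0 := by
      intro h0
      rw [h0, aeval_def, eval₂_at_zero] at hpμ
      have hc0 : (palin q n).coeff 0 = 1 := by
        rw [← hprev, coeff_zero_reverse]; exact hpmonic
      rw [hc0] at hpμ
      simp at hpμ
    have hμinv : μ * μ⁻¹ = 1 := mul_inv_cancel₀ hμne
    have hνq : Polynomial.aeval (μ + μ⁻¹) q = 0 := by
      have h2 := aeval_palin (K := ℂ) q n (by omega) μ hμne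
      rw [hpμ] at h2
      exact (mul_eq_zero.mp h2.symm).resolve_left (pow_ne_zero _ hμne)
    have hνroot : μ + μ⁻¹ ∈ (minpoly ℚ y).aroots ℂ := by
      rw [mem_aroots]
      exact ⟨by rw [hmap]; exact (hqmonic.map _).ne_zero,
        by rw [hmap, aeval_map_algebraMap]; exact hνq⟩
    by_cases hνy : μ + μ⁻¹ = (y:ℂ)
    · have h2 : ((l:ℂ)) * ((l⁻¹ : ℝ):ℂ) = 1 := by
        rw [← Complex.ofReal_mul]; norm_cast
        rw [mul_inv_cancel₀ (ne_of_gt hl0)]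
      have h3 : ((l:ℂ)) + ((l⁻¹ : ℝ):ℂ) = (y:ℂ) := by
        rw [← Complex.ofReal_add, hsum]
      have hfac : (μ - (l:ℂ)) * (μ - ((l⁻¹:ℝ):ℂ)) = 0 := by
        calc (μ - (l:ℂ)) * (μ - ((l⁻¹:ℝ):ℂ))
            = μ^2 - ((l:ℂ) + ((l⁻¹:ℝ):ℂ))*μ + (l:ℂ)*((l⁻¹:ℝ):ℂ) := by ring
          _ = μ^2 - (y:ℂ)*μ + 1 := by rw [h2, h3]
          _ = 0 := by linear_combination μ * hνy - hμinv
      rcases mul_eq_zero.mp hfac with h | h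
      · have hμl : μ = (l:ℂ) := by linear_combination h
        rw [hμl, Complex.norm_real, Real.norm_eq_abs, abs_of_pos hl0]
        exact ⟨le_trans (by rw [div_le_one hl0]; exact hl1.le) hl1.le, le_refl l⟩
      · have hμl : μ = ((l⁻¹:ℝ):ℂ) := by linear_combination h
        rw [hμl, Complex.norm_real, Real.norm_eq_abs, abs_of_pos (by positivity)]
        exact ⟨le_of_eq (one_div l), le_trans (inv_le_one_of_one_le₀ hl1.le) hl1.le⟩
    · have hνlt : ‖μ + μ⁻¹‖ < R/3 := hconj _ hνroot hνy
      have h1 : ‖μ‖ ≤ l := complex_abs_le μ hμne l hl1.le (by linarith)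
      have h2 : ‖μ⁻¹‖ ≤ l := by
        refine complex_abs_le μ⁻¹ (inv_ne_zero hμne) l hl1.le ?_
        rw [inv_inv, add_comm μ⁻¹ μ]
        linarith
      refine ⟨?_, h1⟩
      rw [norm_inv] at h2
      have hμpos : 0 < ‖μ‖ := norm_pos_iff.mpr hμne
      rw [div_le_iff₀ hl0]
      nlinarith [h2, hμpos, mul_inv_cancel₀ (ne_of_gt hμpos)]
  refine ⟨⟨hl1, hlint, hlinvint, hbound⟩, hl1, hlR, palin q n, hpmonic, hprev, hpdeg, hql⟩
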